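/- For any parameter w ∈ ℝ^m and noise values v_i satisfying y_i = x_iᵀw + v_i, any step size η > 0, and every i ≥ 1, the SGD iterates satisfy the identity ‖w − w_{i−1}‖² + η v_i² = ‖w − w_i‖² + η(1 − η‖x_i‖²) e_i² + η e_{p,i}², where e_i := y_i − x_iᵀw_{i−1} and e_{p,i} := x_iᵀw − x_iᵀw_{i−1}. -/
import Mathlib


open scoped RealInnerProductSpace

/-- Lemma 1, fundamental per-step identity for SGD on square loss of a
linear model. Data points are indexed `1, 2, …` (step `i+1` uses data point `i+1`). -/
theorem stmt_0 {m : ℕ} (x : ℕ → EuclideanSpace ℝ (Fin m)) (y : ℕ → ℝ)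
    (η : ℝ) (hη : 0 < η)
    (w : ℕ → EuclideanSpace ℝ (Fin m))
    (hupd : ∀ i : ℕ,
      w (i + 1) = w i + (η * (y (i + 1) - ⟪x (i + 1), w i⟫)) • x (i + 1))
    (wstar : EuclideanSpace ℝ (Fin m)) (v : ℕ → ℝ)
    (hdata : ∀ i : ℕ, y (i + 1) = ⟪x (i + 1), wstar⟫ + v (i + 1)) :
    ∀ i : ℕ,
      ‖wstar - w i‖ ^ 2 + η * v (i + 1) ^ 2 =
        ‖wstar - w (i + 1)‖ ^ 2
          + η * (1 - η * ‖x (i + 1)‖ ^ 2) * (y (i + 1) - ⟪x (i + 1), w i⟫) ^ 2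
          + η * (⟪x (i + 1), wstar⟫ - ⟪x (i + 1), w i⟫) ^ 2 := by
  intro i
  have hv : v (i + 1) = y (i + 1) - ⟪x (i + 1), wstar⟫ := by
    have := hdata i; linarith
  have hw : wstar - w (i + 1)
      = (wstar - w i) - (η * (y (i + 1) - ⟪x (i + 1), w i⟫)) • x (i + 1) := by
    rw [hupd i]; abel
  set c := η * (y (i + 1) - ⟪x (i + 1), w i⟫) with hc
  have hexp : ‖(wstar - w i) - c • x (i + 1)‖ ^ 2
      = ‖wstar - w i‖ ^ 2
        - 2 * (c * (⟪x (i + 1), wstar⟫ - ⟪x (i + 1), w i⟫))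
        + c ^ 2 * ‖x (i + 1)‖ ^ 2 := by
    rw [@norm_sub_sq_real, inner_smul_right, norm_smul, real_inner_comm,
      inner_sub_right, mul_pow, Real.norm_eq_abs, sq_abs]
  rw [hw, hv, hexp]
  ring
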